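/- If a tree S is small (every ray in S is eventually bare) and T is a minor of S, then T is also small. -/

import Mathlib

open SimpleGraph

/-- A ray in a graph: a one-way infinite path. -/
def IsRay {V : Type*} (G : SimpleGraph V) (f : ℕ → V) : Prop :=
  Function.Injective f ∧ ∀ n, G.Adj (f n) (f (n + 1))

/-- The degree of a vertex, as an extended natural number. -/
noncomputable def eDeg {V : Type*} (G : SimpleGraph V) (v : V) : ℕ∞ :=
  (G.neighborSet v).encard

/-- A ray is eventually bare if from some index on all its vertices have degree 2. -/
def EventuallyBare {V : Type*} (G : SimpleGraph V) (f : ℕ → V) : Prop :=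
  ∃ M : ℕ, ∀ n ≥ M, eDeg G (f n) = 2

/-- A tree is small if every ray in it is eventually bare. -/
def IsSmall {V : Type*} (G : SimpleGraph V) : Prop :=
  ∀ f : ℕ → V, IsRay G f → EventuallyBare G f

/-- A minor model of `T` in `S`: pairwise disjoint nonempty connected branch sets,
every edge of `T` witnessed by an edge of `S` between the corresponding branch sets. -/
structure IsModel {V W : Type*} (T : SimpleGraph V) (S : SimpleGraph W)
    (μ : V → Set W) : Prop where
  nonempty : ∀ v, (μ v).Nonempty
  connected : ∀ v, (S.induce (μ v)).Connected
  disjoint : ∀ v w, v ≠ w → Disjoint (μ v) (μ w)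
  edge : ∀ v w, T.Adj v w → ∃ a ∈ μ v, ∃ b ∈ μ w, S.Adj a b

/-- `T` is a minor of `S`. -/
def IsMinorOf {V W : Type*} (T : SimpleGraph V) (S : SimpleGraph W) : Prop :=
  ∃ μ : V → Set W, IsModel T S μ

/-- Tree order relative to a root: `v` lies on the (unique) path from `r` to `w`. -/
def treeLE {V : Type*} (G : SimpleGraph V) (r v w : V) : Prop :=
  v = w ∨ ∃ p : G.Walk r w, p.IsPath ∧ v ∈ p.support

/-- Closure of a vertex set: the set together with all vertices on paths joining its members. -/
def treeClosure {V : Type*} (G : SimpleGraph V) (A : Set V) : Set V :=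
  A ∪ {x | ∃ a ∈ A, ∃ b ∈ A, ∃ p : G.Walk a b, p.IsPath ∧ x ∈ p.support}


-- Auxiliary lemmas

def cumAux (L : ℕ → ℕ) : ℕ → ℕ
  | 0 => 0
  | n+1 => cumAux L n + L n + 1

def cAux {W : Type*} (a0 : W) (b : ℕ → W) : ℕ → W
  | 0 => a0
  | n+1 => b n

lemma getVert_mem_support' {V : Type*} {G : SimpleGraph V} {u v : V} (p : G.Walk u v)
    {i : ℕ} (hi : i ≤ p.length) : p.getVert i ∈ p.support :=
  Walk.mem_support_iff_exists_getVert.mpr ⟨i, rfl, hi⟩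

lemma getVert_inj_of_isPath {V : Type*} {G : SimpleGraph V} :
    ∀ {u v : V} (p : G.Walk u v), p.IsPath → ∀ i j, i ≤ p.length → j ≤ p.length →
      p.getVert i = p.getVert j → i = j := by
  intro u v p
  induction p with
  | nil => intro _ i j hi hj _; simp at hi hj; omega
  | cons h q ih =>
    intro hp i j hi hj hij
    rw [Walk.cons_isPath_iff] at hp
    match i, j with
    | 0, 0 => rfl
    | 0, j+1 =>
      exfalso
      rw [Walk.getVert_zero, Walk.getVert_cons_succ] at hij
      exact hp.2 (hij ▸ getVert_mem_support' q (by simpa using hj))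
    | i+1, 0 =>
      exfalso
      rw [Walk.getVert_zero, Walk.getVert_cons_succ] at hij
      exact hp.2 (hij ▸ getVert_mem_support' q (by simpa using hi))
    | i+1, j+1 =>
      rw [Walk.getVert_cons_succ, Walk.getVert_cons_succ] at hij
      have := ih hp.1 i j (by simpa using hi) (by simpa using hj) hij
      omega

lemma exists_rayWalk {V : Type*} {G : SimpleGraph V} {f : ℕ → V} (hf : IsRay G f) (n d : ℕ) :
    ∃ p : G.Walk (f n) (f (n + d)), p.length = d ∧
      p.support = (List.range (d+1)).map (fun i => f (n+i)) := by
  induction d with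
  | zero => exact ⟨Walk.nil, rfl, by simp [List.range_succ]⟩
  | succ d ih =>
    obtain ⟨p, hl, hs⟩ := ih
    refine ⟨(p.concat (show G.Adj (f (n+d)) (f (n+d+1)) from hf.2 (n+d))), ?_, ?_⟩
    · rw [Walk.length_concat, hl]
    · rw [Walk.support_concat, hs]
      simp [List.range_succ, List.concat_eq_append, Nat.add_assoc]

lemma exists_rayPath {V : Type*} {G : SimpleGraph V} {f : ℕ → V} (hf : IsRay G f) (n d : ℕ) :
    ∃ p : G.Walk (f n) (f (n + d)), p.length = d ∧ p.IsPath := by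
  obtain ⟨p, hl, hs⟩ := exists_rayWalk hf n d
  refine ⟨p, hl, ?_⟩
  rw [Walk.isPath_def, hs]
  exact List.Nodup.map (fun i j hij => by have := hf.1 hij; omega) List.nodup_range

lemma ray_adj_succ {V : Type*} {T : SimpleGraph V} (hT : T.IsTree) {f : ℕ → V} (hf : IsRay T f)
    {m k : ℕ} (hlt : m < k) (hadj : T.Adj (f m) (f k)) : k = m + 1 := by
  by_contra hne
  obtain ⟨d, rfl⟩ : ∃ d, k = m + d := ⟨k - m, by omega⟩
  have hd : 2 ≤ d := by omega
  obtain ⟨p, hl, hp⟩ := exists_rayPath hf m d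
  have hp2 : (Walk.cons hadj Walk.nil : T.Walk (f m) (f (m+d))).IsPath := by
    rw [Walk.cons_isPath_iff]
    refine ⟨Walk.IsPath.nil, ?_⟩
    simp only [Walk.support_nil, List.mem_singleton]
    intro he
    have := hf.1 he
    omega
  have := hT.IsAcyclic.path_unique ⟨p, hp⟩ ⟨Walk.cons hadj Walk.nil, hp2⟩
  have hlen := congrArg (fun q : T.Path (f m) (f (m+d)) => q.val.length) this
  simp [hl] at hlen
  omega

lemma ray_third_nbr_not_range {V : Type*} {T : SimpleGraph V} (hT : T.IsTree) {f : ℕ → V}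
    (hf : IsRay T f) {k : ℕ} {u : V} (hadj : T.Adj (f (k+1)) u)
    (h1 : u ≠ f k) (h2 : u ≠ f (k+2)) : u ∉ Set.range f := by
  rintro ⟨j, rfl⟩
  rcases lt_trichotomy j (k+1) with hj | hj | hj
  · have := ray_adj_succ hT hf hj hadj.symm
    exact h1 (by rw [show j = k by omega])
  · exact hadj.ne (by rw [hj])
  · have := ray_adj_succ hT hf hj hadj
    exact h2 (by rw [this])

lemma exists_crossing {V : Type*} {G : SimpleGraph V} {P : V → Prop} :
    ∀ {x z : V} (w : G.Walk x z), ¬ P x → P z →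
      ∃ p q, G.Adj q p ∧ P p ∧ ¬ P q ∧ q ∈ w.support := by
  intro x z w
  induction w with
  | nil => intro hx hz; exact absurd hz hx
  | @cons a bb cc h q ih =>
    intro hx hz
    by_cases h2 : P bb
    · exact ⟨_, _, h, h2, hx, Walk.start_mem_support _⟩
    · obtain ⟨p', q', hadj, hp', hq', hmem⟩ := ih h2 hz
      exact ⟨p', q', hadj, hp', hq', by simp [Walk.support_cons, hmem]⟩

lemma exists_pathIn {W : Type*} {S : SimpleGraph W} {s : Set W} (hc : (S.induce s).Connected)
    {x y : W} (hx : x ∈ s) (hy : y ∈ s) :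
    ∃ p : S.Walk x y, p.IsPath ∧ ∀ z ∈ p.support, z ∈ s := by
  classical
  obtain ⟨q⟩ := hc ⟨x, hx⟩ ⟨y, hy⟩
  let q' := q.toPath
  refine ⟨(q'.val.map (SimpleGraph.Embedding.induce (G := S) s).toHom), ?_, ?_⟩
  · exact Walk.map_isPath_of_injective (SimpleGraph.Embedding.induce (G := S) s).injective q'.2
  · intro z hz
    replace hz : z ∈ q'.val.support.map (SimpleGraph.Embedding.induce (G := S) s).toHom := by
      rw [← Walk.support_map]; exact hz
    obtain ⟨y0, _, rfl⟩ := List.mem_map.mp hz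
    exact y0.2

/-- If a tree `S` is small and `T` is a minor of `S`, then `T` is small. -/
theorem stmt0 {V W : Type*} (T : SimpleGraph V) (S : SimpleGraph W)
    (hT : T.IsTree) (hS : S.IsTree) (hSsmall : IsSmall S) (h : IsMinorOf T S) :
    IsSmall T := by
  classical
  obtain ⟨μ, hm⟩ := h
  intro f hf
  have hfinj := hf.1
  have hdisj : ∀ {n m : ℕ}, n ≠ m → ∀ {z}, z ∈ μ (f n) → z ∈ μ (f m) → False := by
    intro n m hnm z h1 h2
    exact Set.disjoint_left.mp (hm.disjoint _ _ (fun he => hnm (hfinj he))) h1 h2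
  choose a ha b hb hab using fun n => hm.edge _ _ (hf.2 n)
  let c : ℕ → W := cAux (a 0) b
  have hcs : ∀ n, c (n+1) = b n := fun n => rfl
  have hc : ∀ n, c n ∈ μ (f n) := by
    intro n; cases n with
    | zero => exact ha 0
    | succ m => exact hb m
  choose seg hsegPath hsegSupp using
    fun n => exists_pathIn (hm.connected (f n)) (hc n) (ha n)
  let cum : ℕ → ℕ := cumAux (fun n => (seg n).length)
  have hcum0 : cum 0 = 0 := rfl
  have hcums : ∀ n, cum (n+1) = cum n + (seg n).length + 1 := fun n => rfl
  have hcum_mono : StrictMono cum := strictMono_nat_of_lt_succ (fun n => by rw [hcums]; omega)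
  have hcum_ge : ∀ n, n ≤ cum n := by
    intro n; induction n with
    | zero => omega
    | succ m ihm => have := hcums m; omega
  let idx : ℕ → ℕ := fun m => Nat.findGreatest (fun n => cum n ≤ m) m
  have hidx1 : ∀ m, cum (idx m) ≤ m := fun m =>
    Nat.findGreatest_spec (P := fun n => cum n ≤ m) (m := 0) (n := m) (Nat.zero_le m) (Nat.zero_le m)
  have hidx2 : ∀ m, m < cum (idx m + 1) := by
    intro m
    by_contra hcon
    push_neg at hcon
    exact Nat.findGreatest_is_greatest (P := fun n => cum n ≤ m) (n := m) (k := idx m + 1) (Nat.lt_succ_self _) (le_trans (hcum_ge _) hcon) hcon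
  have hidxu : ∀ n m, cum n ≤ m → m < cum (n+1) → idx m = n := by
    intro n m h1 h2
    rcases lt_trichotomy (idx m) n with hlt | he | hlt
    · have h3 : cum (idx m + 1) ≤ cum n := hcum_mono.monotone (by omega)
      have := hidx2 m; omega
    · exact he
    · have h3 : cum (n+1) ≤ cum (idx m) := hcum_mono.monotone (by omega)
      have := hidx1 m; omega
  let g : ℕ → W := fun m => (seg (idx m)).getVert (m - cum (idx m))
  have hg : ∀ m, g m = (seg (idx m)).getVert (m - cum (idx m)) := fun _ => rfl
  have hg_block : ∀ n m, cum n ≤ m → m < cum (n+1) → g m = (seg n).getVert (m - cum n) := by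
    intro n m h1 h2; rw [hg, hidxu n m h1 h2]
  have hsub_le : ∀ m, m - cum (idx m) ≤ (seg (idx m)).length := by
    intro m; have h1 := hidx1 m; have h2 := hidx2 m; have := hcums (idx m); omega
  have hg_supp : ∀ m, g m ∈ (seg (idx m)).support := fun m =>
    getVert_mem_support' _ (hsub_le m)
  have hg_mu : ∀ m, g m ∈ μ (f (idx m)) := fun m => hsegSupp _ _ (hg_supp m)
  have hginj : Function.Injective g := by
    intro m1 m2 he
    by_cases hne : idx m1 = idx m2
    · obtain ⟨n0, hn1, hn2⟩ : ∃ n0, idx m1 = n0 ∧ idx m2 = n0 := ⟨idx m1, rfl, hne.symm⟩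
      have e1 : g m1 = (seg n0).getVert (m1 - cum n0) := by rw [hg m1, hn1]
      have e2 : g m2 = (seg n0).getVert (m2 - cum n0) := by rw [hg m2, hn2]
      have hs1 : m1 - cum n0 ≤ (seg n0).length := by rw [← hn1]; exact hsub_le m1
      have hs2 : m2 - cum n0 ≤ (seg n0).length := by rw [← hn2]; exact hsub_le m2
      have he' : (seg n0).getVert (m1 - cum n0) = (seg n0).getVert (m2 - cum n0) := by
        rw [← e1, ← e2]; exact he
      have heq := getVert_inj_of_isPath _ (hsegPath n0) _ _ hs1 hs2 he'
      have hc1 : cum n0 ≤ m1 := by rw [← hn1]; exact hidx1 m1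
      have hc2 : cum n0 ≤ m2 := by rw [← hn2]; exact hidx1 m2
      omega
    · exfalso
      exact hdisj hne (hg_mu m1) (by rw [he]; exact hg_mu m2)
  have hgadj : ∀ m, S.Adj (g m) (g (m+1)) := by
    intro m
    have h1 := hidx1 m
    have h2 := hidx2 m
    have hcn := hcums (idx m)
    by_cases hcase : m + 1 < cum (idx m + 1)
    · have e1 : g m = (seg (idx m)).getVert (m - cum (idx m)) := hg m
      have e2 : g (m+1) = (seg (idx m)).getVert (m + 1 - cum (idx m)) :=
        hg_block (idx m) (m+1) (by omega) hcase
      rw [e1, e2, show m + 1 - cum (idx m) = (m - cum (idx m)) + 1 by omega]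
      exact Walk.adj_getVert_succ _ (by omega)
    · have hm1 : m + 1 = cum (idx m + 1) := by omega
      have e1 : g m = a (idx m) := by
        rw [hg m, show m - cum (idx m) = (seg (idx m)).length by omega, Walk.getVert_length]
      have e2 : g (m+1) = b (idx m) := by
        have h3 : g (m+1) = (seg (idx m + 1)).getVert ((m+1) - cum (idx m + 1)) :=
          hg_block (idx m + 1) (m+1) (by omega) (by have := hcums (idx m + 1); omega)
        rw [h3, show (m+1) - cum (idx m + 1) = 0 by omega, Walk.getVert_zero]
        exact hcs (idx m)
      rw [e1, e2]
      exact hab (idx m)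
  obtain ⟨M, hM⟩ := hSsmall g ⟨hginj, hgadj⟩
  refine ⟨M + 1, ?_⟩
  intro n hn
  obtain ⟨k, rfl⟩ : ∃ k, n = k + 1 := ⟨n - 1, by omega⟩
  have key : ∀ u, T.Adj (f (k+1)) u → u = f k ∨ u = f (k+2) := by
    intro u hadj
    by_contra hcon
    push_neg at hcon
    obtain ⟨h1, h2⟩ := hcon
    have hur : u ∉ Set.range f := ray_third_nbr_not_range hT hf hadj h1 h2
    obtain ⟨x, hx, y, hy, hxy⟩ := hm.edge _ _ hadj
    have hAy : ∀ z ∈ μ u, z ∉ Set.range g := by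
      rintro z hz ⟨m, rfl⟩
      exact Set.disjoint_left.mp
        (hm.disjoint u (f (idx m)) (fun he => hur ⟨idx m, he.symm⟩)) hz (hg_mu m)
    have hBy : ∀ z, z ∈ μ (f (k+1)) → z ∉ (seg (k+1)).support → z ∉ Set.range g := by
      rintro z hz hzs ⟨m, rfl⟩
      have hik : idx m = k + 1 := by
        by_contra hne
        exact hdisj hne (hg_mu m) hz
      exact hzs (by rw [← hik]; exact hg_supp m)
    have hmain : ∃ x' y', x' ∈ (seg (k+1)).support ∧ S.Adj x' y' ∧ y' ∉ Set.range g := by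
      by_cases hxs : x ∈ (seg (k+1)).support
      · exact ⟨x, y, hxs, hxy, hAy y hy⟩
      · obtain ⟨w, hwPath, hwSupp⟩ := exists_pathIn (hm.connected (f (k+1))) hx (ha (k+1))
        have hend : a (k+1) ∈ (seg (k+1)).support := Walk.end_mem_support _
        obtain ⟨p, q, hadj', hp, hq, hqmem⟩ :=
          exists_crossing (P := (· ∈ (seg (k+1)).support)) w hxs hend
        exact ⟨p, q, hp, hadj'.symm, hBy q (hwSupp q hqmem) hq⟩
    obtain ⟨x', y', hx's, hadj', hy'r⟩ := hmain
    obtain ⟨i, hgi, hile⟩ := Walk.mem_support_iff_exists_getVert.mp hx's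
    have hmlt : cum (k+1) + i < cum (k+1+1) := by have := hcums (k+1); omega
    have hgm : g (cum (k+1) + i) = x' := by
      rw [hg_block (k+1) (cum (k+1) + i) (by omega) hmlt,
        show cum (k+1) + i - cum (k+1) = i by omega]
      exact hgi
    set m := cum (k+1) + i with hmdef
    have hmM : M ≤ m := by have := hcum_ge (k+1); omega
    have hm1 : 1 ≤ m := by have := hcum_ge (k+1); omega
    have hdeg := hM m hmM
    have hn1 : g (m-1) ∈ S.neighborSet (g m) := by
      have h5 := hgadj (m-1)
      rw [show m - 1 + 1 = m by omega] at h5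
      exact h5.symm
    have hn2 : g (m+1) ∈ S.neighborSet (g m) := hgadj m
    have hn3 : y' ∈ S.neighborSet (g m) := by rw [hgm]; exact hadj'
    have hd12 : g (m-1) ≠ g (m+1) := fun he => by have := hginj he; omega
    have hd13 : g (m-1) ≠ y' := fun he => hy'r ⟨m-1, he⟩
    have hd23 : g (m+1) ≠ y' := fun he => hy'r ⟨m+1, he⟩
    have hsub : ({g (m-1), g (m+1), y'} : Set W) ⊆ S.neighborSet (g m) := by
      intro z hz
      simp only [Set.mem_insert_iff, Set.mem_singleton_iff] at hz
      rcases hz with rfl | rfl | rfl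
      · exact hn1
      · exact hn2
      · exact hn3
    have h3 : ({g (m-1), g (m+1), y'} : Set W).encard = 3 := by
      rw [Set.encard_insert_of_notMem (by simp [hd12, hd13]),
        Set.encard_insert_of_notMem (by simp [hd23]), Set.encard_singleton]
      rfl
    have hle := Set.encard_mono hsub
    rw [h3] at hle
    simp only [eDeg] at hdeg
    rw [hdeg] at hle
    norm_num at hle
  have hnb : T.neighborSet (f (k+1)) = {f k, f (k+2)} := by
    apply Set.eq_of_subset_of_subset
    · intro u hu
      rcases key u hu with rfl | rfl
      · exact Set.mem_insert _ _
      · exact Set.mem_insert_of_mem _ rfl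
    · intro u hu
      simp only [Set.mem_insert_iff, Set.mem_singleton_iff] at hu
      rcases hu with rfl | rfl
      · exact (hf.2 k).symm
      · exact hf.2 (k+1)
  simp only [eDeg]
  rw [hnb]
  exact Set.encard_pair (fun he => by have := hfinj he; omega)
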